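/- Let a < b, τ > 0, let Σ be a nonempty finite index set with weights ω_p > 0 and predicted values ũ_p ∈ ℝ for p ∈ Σ, and let m ∈ ℝ. The nonlinear equation F(ξ) = 0, where F(ξ) = Σ_{p∈Σ} ω_p·cutoff(ũ_p + τξ) − m, has a solution ξ ∈ ℝ if and only if a·Σ_{p∈Σ} ω_p ≤ m ≤ b·Σ_{p∈Σ} ω_p. -/

import Mathlib

/-- The nonlinear mass-constraint equation `F(ξ) = 0` has a solution if and only if
the target mass `m` lies between `a·∑ω` and `b·∑ω`. -/
theorem stmt_3 {ι : Type*} (a b τ m : ℝ) (hab : a < b) (hτ : 0 < τ)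
    (S : Finset ι) (hS : S.Nonempty) (ω : ι → ℝ) (hω : ∀ p ∈ S, 0 < ω p)
    (uPred : ι → ℝ) :
    (∃ ξ : ℝ, (∑ p ∈ S, ω p * max a (min b (uPred p + τ * ξ))) - m = 0) ↔
      (a * ∑ p ∈ S, ω p ≤ m ∧ m ≤ b * ∑ p ∈ S, ω p) := by
  constructor
  · rintro ⟨ξ, hξ⟩
    have hm : m = ∑ p ∈ S, ω p * max a (min b (uPred p + τ * ξ)) := by linarith
    constructor
    · rw [hm, Finset.mul_sum]
      refine Finset.sum_le_sum fun p hp => ?_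
      have h1 : a ≤ max a (min b (uPred p + τ * ξ)) := le_max_left _ _
      nlinarith [hω p hp]
    · rw [hm, Finset.mul_sum]
      refine Finset.sum_le_sum fun p hp => ?_
      have h1 : max a (min b (uPred p + τ * ξ)) ≤ b :=
        max_le hab.le (min_le_left _ _)
      nlinarith [hω p hp]
  · rintro ⟨h1, h2⟩
    set F : ℝ → ℝ := fun ξ => ∑ p ∈ S, ω p * max a (min b (uPred p + τ * ξ)) with hF
    set M := S.sup' hS uPred with hM
    set L := S.inf' hS uPred with hL
    have hLM : L ≤ M := by
      obtain ⟨p, hp⟩ := hS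
      exact le_trans (Finset.inf'_le _ hp) (Finset.le_sup' _ hp)
    set ξ₁ := (a - M) / τ with hξ₁
    set ξ₂ := (b - L) / τ with hξ₂
    have hξle : ξ₁ ≤ ξ₂ := (div_le_div_iff_of_pos_right hτ).mpr (by linarith)
    have hcont : Continuous F := by
      apply continuous_finset_sum
      intro p _
      exact continuous_const.mul (continuous_const.max (continuous_const.min
        (continuous_const.add (continuous_const.mul continuous_id))))
    have hF1 : F ξ₁ = a * ∑ p ∈ S, ω p := by
      rw [hF, Finset.mul_sum]
      refine Finset.sum_congr rfl fun p hp => ?_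
      have h : uPred p + τ * ξ₁ ≤ a := by
        have : τ * ξ₁ = a - M := by rw [hξ₁]; field_simp [hτ.ne']
        have hpM : uPred p ≤ M := Finset.le_sup' _ hp
        linarith
      rw [min_eq_right (le_trans h hab.le), max_eq_left h, mul_comm]
    have hF2 : F ξ₂ = b * ∑ p ∈ S, ω p := by
      rw [hF, Finset.mul_sum]
      refine Finset.sum_congr rfl fun p hp => ?_
      have h : b ≤ uPred p + τ * ξ₂ := by
        have : τ * ξ₂ = b - L := by rw [hξ₂]; field_simp [hτ.ne']
        have hpL : L ≤ uPred p := Finset.inf'_le _ hp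
        linarith
      rw [min_eq_left h, max_eq_right hab.le, mul_comm]
    have hm : m ∈ Set.Icc (F ξ₁) (F ξ₂) := by rw [hF1, hF2]; exact ⟨h1, h2⟩
    obtain ⟨ξ, _, hξ⟩ := intermediate_value_Icc hξle hcont.continuousOn hm
    exact ⟨ξ, by show F ξ - m = 0; rw [hξ]; ring⟩
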